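/- The no-mixed-state assumption cannot be dropped for progress preservation: there exist two communicating systems S_1 and S_2 over disjoint participant sets, a set of interfaces H = {h_1, h_2} for {S_1, S_2} (whose interface CFSMs contain mixed states), a connection model CM for H, and a connection policy K for H complying with CM, such that S_1, S_2 and K all satisfy the progress property, but the multicomposition MC({S_1, S_2}, K) does not satisfy the progress property. -/

import Mathlib

namespace CFSM

/-- Direction of a communication action: output (`!`) or input (`?`). -/
inductive Dir : Type where
  | out : Dir
  | inp : Dir
deriving DecidableEq

instance : Fintype Dir :=
  ⟨{Dir.out, Dir.inp}, fun x => by cases x <;> simp⟩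

/-- An action `pq!a` (output) or `pq?a` (input) over participants `P` and messages `A`:
`snd` is the sender `p`, `rcv` the receiver `q`, `msg` the message `a`. -/
structure Act (P : Type) (A : Type) : Type where
  snd : P
  rcv : P
  dir : Dir
  msg : A

instance {P A : Type} [Finite P] [Finite A] : Finite (Act P A) :=
  Finite.of_injective (fun l => (l.snd, l.rcv, l.dir, l.msg))
    (fun a b h => by
      cases a; cases b
      simp only [Prod.mk.injEq] at h
      obtain ⟨h1, h2, h3, h4⟩ := h
      subst h1; subst h2; subst h3; subst h4; rfl)

/-- The subject of an action: the sender of an output, the receiver of an input. -/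
def Act.subject {P A : Type} (l : Act P A) : P :=
  match l.dir with
  | .out => l.snd
  | .inp => l.rcv

/-- A communicating system over participants `P` and messages `A`:
one machine (state type, initial state and transition relation) per participant. -/
structure CS (P : Type) (A : Type) : Type 1 where
  St : P → Type
  init : ∀ p, St p
  delta : ∀ p, Set (St p × Act P A × St p)

/-- All actions of the machine of participant `p` have subject `p`
(the name of the machine) and distinct endpoints. -/
def CS.WellFormed {P A : Type} (S : CS P A) : Prop :=
  ∀ p t, t ∈ S.delta p → ((t.2.1 : Act P A).subject = p ∧ t.2.1.snd ≠ t.2.1.rcv)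

/-- A configuration: a local state for each machine and a FIFO buffer
for each ordered pair of participants. -/
structure Config {P A : Type} (S : CS P A) : Type where
  st : ∀ p, S.St p
  ch : P → P → List A

/-- The initial configuration: all machines in their initial state, all channels empty. -/
def CS.initConfig {P A : Type} (S : CS P A) : Config S :=
  ⟨S.init, fun _ _ => []⟩

/-- The labelled transition relation between configurations. -/
def StepL {P A : Type} (S : CS P A) (c : Config S) (l : Act P A) (c' : Config S) : Prop :=
  match l.dir with
  | .out =>
      (c.st l.snd, l, c'.st l.snd) ∈ S.delta l.snd ∧
      (∀ p, p ≠ l.snd → c'.st p = c.st p) ∧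
      c'.ch l.snd l.rcv = c.ch l.snd l.rcv ++ [l.msg] ∧
      (∀ p q, (p, q) ≠ (l.snd, l.rcv) → c'.ch p q = c.ch p q)
  | .inp =>
      (c.st l.rcv, l, c'.st l.rcv) ∈ S.delta l.rcv ∧
      (∀ p, p ≠ l.rcv → c'.st p = c.st p) ∧
      c.ch l.snd l.rcv = l.msg :: c'.ch l.snd l.rcv ∧
      (∀ p q, (p, q) ≠ (l.snd, l.rcv) → c'.ch p q = c.ch p q)

/-- Unlabelled transition relation. -/
def Step {P A : Type} (S : CS P A) (c c' : Config S) : Prop :=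
  ∃ l, StepL S c l c'

/-- Reachability between configurations. -/
def Reach {P A : Type} (S : CS P A) : Config S → Config S → Prop :=
  Relation.ReflTransGen (Step S)

/-- The set of configurations reachable from the initial configuration. -/
def RC {P A : Type} (S : CS P A) : Set (Config S) :=
  {c | Reach S S.initConfig c}

/-- A local state is final if it has no outgoing transition. -/
def FinalSt {Q P A : Type} (δ : Set (Q × Act P A × Q)) (q : Q) : Prop :=
  ∀ l q', (q, l, q') ∉ δ

/-- A local state is receiving if it is not final and all its outgoing
transitions are labelled with input actions. -/
def ReceivingSt {Q P A : Type} (δ : Set (Q × Act P A × Q)) (q : Q) : Prop :=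
  (∃ l q', (q, l, q') ∈ δ) ∧ ∀ l q', (q, l, q') ∈ δ → (l : Act P A).dir = Dir.inp

/-- A local state is mixed if it has at least one outgoing output-labelled
transition and at least one outgoing input-labelled transition. -/
def MixedSt {Q P A : Type} (δ : Set (Q × Act P A × Q)) (q : Q) : Prop :=
  (∃ l q', (q, l, q') ∈ δ ∧ (l : Act P A).dir = Dir.out) ∧
  (∃ l q', (q, l, q') ∈ δ ∧ (l : Act P A).dir = Dir.inp)

/-- A machine has no mixed states. -/
def NoMixed {Q P A : Type} (δ : Set (Q × Act P A × Q)) : Prop :=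
  ∀ q, ¬ MixedSt δ q

/-- Deadlock configuration: all channels empty but all machines in receiving states. -/
def DeadlockConfig {P A : Type} (S : CS P A) (c : Config S) : Prop :=
  (∀ p q, c.ch p q = []) ∧ ∀ p, ReceivingSt (S.delta p) (c.st p)

def DeadlockFree {P A : Type} (S : CS P A) : Prop :=
  ∀ c ∈ RC S, ¬ DeadlockConfig S c

/-- Orphan-message configuration: all machines final but some channel nonempty. -/
def OrphanConfig {P A : Type} (S : CS P A) (c : Config S) : Prop :=
  (∀ p, FinalSt (S.delta p) (c.st p)) ∧ ∃ p q, c.ch p q ≠ []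

def OrphanFree {P A : Type} (S : CS P A) : Prop :=
  ∀ c ∈ RC S, ¬ OrphanConfig S c

/-- Unspecified reception configuration: some machine `r` is in a receiving state and,
for every input transition of `r`, the corresponding channel is nonempty with a
first element different from the expected message. -/
def URConfig {P A : Type} (S : CS P A) (c : Config S) : Prop :=
  ∃ r, ReceivingSt (S.delta r) (c.st r) ∧
    ∀ s a q', (c.st r, Act.mk s r Dir.inp a, q') ∈ S.delta r →
      (c.ch s r ≠ [] ∧ ¬ ∃ w, c.ch s r = a :: w)

def ReceptionErrorFree {P A : Type} (S : CS P A) : Prop :=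
  ∀ c ∈ RC S, ¬ URConfig S c

/-- Progress: every reachable configuration has an outgoing transition or all
machines are in final states. -/
def ProgressProp {P A : Type} (S : CS P A) : Prop :=
  ∀ c ∈ RC S, (∃ c', Step S c c') ∨ ∀ p, FinalSt (S.delta p) (c.st p)

/-- `p`-lock configuration: `p` is in a receiving state and never occurs as the
subject of an action in any transition sequence from `c`. -/
def PLockConfig {P A : Type} (S : CS P A) (c : Config S) (p : P) : Prop :=
  ReceivingSt (S.delta p) (c.st p) ∧
  ∀ c1 l c2, Reach S c c1 → StepL S c1 l c2 → l.subject ≠ p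

def LockFree {P A : Type} (S : CS P A) : Prop :=
  ∀ c ∈ RC S, ∀ p, ¬ PLockConfig S c p

section Composition

variable {I : Type} {P : I → Type} {A : Type}

/-- Messages occurring in input actions of the machine of `p`. -/
def inMsgs {Pp A : Type} (S : CS Pp A) (p : Pp) : Set A :=
  {a | ∃ q s q', (q, Act.mk s p Dir.inp a, q') ∈ S.delta p}

/-- Messages occurring in output actions of the machine of `p`. -/
def outMsgs {Pp A : Type} (S : CS Pp A) (p : Pp) : Set A :=
  {a | ∃ q r q', (q, Act.mk p r Dir.out a, q') ∈ S.delta p}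

/-- `CM` is a connection model for the interfaces `hh i` of the family `S`
(the interface `h_i` is represented by its index `i`). -/
def IsConnModel (S : ∀ i, CS (P i) A) (hh : ∀ i, P i) (CM : Set (I × A × I)) : Prop :=
  ∀ i a,
    (a ∈ inMsgs (S i) (hh i) →
      ∃ j, j ≠ i ∧ a ∈ outMsgs (S j) (hh j) ∧ (i, a, j) ∈ CM) ∧
    (a ∈ outMsgs (S i) (hh i) →
      ∃ j, j ≠ i ∧ a ∈ inMsgs (S j) (hh j) ∧ (j, a, i) ∈ CM)

/-- `CM` is a strong connection model: additionally the connecting partner is unique. -/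
def IsStrongConnModel (S : ∀ i, CS (P i) A) (hh : ∀ i, P i) (CM : Set (I × A × I)) : Prop :=
  IsConnModel S hh CM ∧
  ∀ i a,
    (a ∈ inMsgs (S i) (hh i) → ∃! j, (i, a, j) ∈ CM) ∧
    (a ∈ outMsgs (S i) (hh i) → ∃! j, (j, a, i) ∈ CM)

/-- Conditions (*) and (**) for a candidate transition relation `d` of the local
connection policy of interface `hh i` (the name `k_i` is represented by `i`). -/
def PolicySat (S : ∀ i, CS (P i) A) (hh : ∀ i, P i) (CM : Set (I × A × I)) (i : I)
    (d : Set ((S i).St (hh i) × Act I A × (S i).St (hh i))) : Prop :=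
  (∀ q r a q', (q, Act.mk r (hh i) Dir.inp a, q') ∈ (S i).delta (hh i) →
      ∃ j, j ≠ i ∧ (i, a, j) ∈ CM ∧ (q, Act.mk i j Dir.out a, q') ∈ d) ∧
  (∀ q r a q', (q, Act.mk (hh i) r Dir.out a, q') ∈ (S i).delta (hh i) →
      ∃ j, j ≠ i ∧ (j, a, i) ∈ CM ∧ (q, Act.mk j i Dir.inp a, q') ∈ d)

/-- `d` belongs to the local connection policy set `IS(M_{h_i}, CM)`:
it is a minimal relation satisfying (*) and (**).  (The states `q̇` of the
policy machine are identified with the states `q` of `M_{h_i}`.) -/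
def InIS (S : ∀ i, CS (P i) A) (hh : ∀ i, P i) (CM : Set (I × A × I)) (i : I)
    (d : Set ((S i).St (hh i) × Act I A × (S i).St (hh i))) : Prop :=
  PolicySat S hh CM i d ∧ ∀ d', d' ⊆ d → PolicySat S hh CM i d' → d' = d

/-- The communicating system (over the participant type `I` of names `k_i`)
determined by the family of transition relations `Kd` of a connection policy. -/
def policyCS (S : ∀ i, CS (P i) A) (hh : ∀ i, P i)
    (Kd : ∀ i, Set ((S i).St (hh i) × Act I A × (S i).St (hh i))) : CS I A where
  St := fun i => (S i).St (hh i)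
  init := fun i => (S i).init (hh i)
  delta := Kd

/-- `Kd` is a connection policy for the interfaces `hh` complying with `CM`. -/
def IsConnPolicy (S : ∀ i, CS (P i) A) (hh : ∀ i, P i) (CM : Set (I × A × I))
    (Kd : ∀ i, Set ((S i).St (hh i) × Act I A × (S i).St (hh i))) : Prop :=
  ∀ i, InIS S hh CM i (Kd i)

/-- States of the gateway for interface `hh i`: the original states plus one
fresh state per transition of `M_{h_i}`. -/
abbrev GWState (S : ∀ i, CS (P i) A) (hh : ∀ i, P i) (i : I) : Type :=
  (S i).St (hh i) ⊕ ((S i).St (hh i) × Act (P i) A × (S i).St (hh i))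

/-- Lifting of a local action of system `i` to the composed participant type. -/
def liftAct (i : I) (l : Act (P i) A) : Act ((j : I) × P j) A :=
  Act.mk ⟨i, l.snd⟩ ⟨i, l.rcv⟩ l.dir l.msg

/-- Transition relation of the gateway `M_{h_i} ⟲ M_{k_i}`. -/
def GWdelta (S : ∀ i, CS (P i) A) (hh : ∀ i, P i)
    (Kd : ∀ i, Set ((S i).St (hh i) × Act I A × (S i).St (hh i))) (i : I) :
    Set (GWState S hh i × Act ((j : I) × P j) A × GWState S hh i) :=
  {x | ∃ q a q',
    (∃ s r, (q, Act.mk (hh i) s Dir.out a, q') ∈ (S i).delta (hh i) ∧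
        (q, Act.mk r i Dir.inp a, q') ∈ Kd i ∧
        (x = (Sum.inl q, Act.mk ⟨r, hh r⟩ ⟨i, hh i⟩ Dir.inp a,
              Sum.inr (q, Act.mk (hh i) s Dir.out a, q')) ∨
         x = (Sum.inr (q, Act.mk (hh i) s Dir.out a, q'),
              Act.mk ⟨i, hh i⟩ ⟨i, s⟩ Dir.out a, Sum.inl q'))) ∨
    (∃ s r, (q, Act.mk s (hh i) Dir.inp a, q') ∈ (S i).delta (hh i) ∧
        (q, Act.mk i r Dir.out a, q') ∈ Kd i ∧
        (x = (Sum.inl q, Act.mk ⟨i, s⟩ ⟨i, hh i⟩ Dir.inp a,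
              Sum.inr (q, Act.mk s (hh i) Dir.inp a, q')) ∨
         x = (Sum.inr (q, Act.mk s (hh i) Dir.inp a, q'),
              Act.mk ⟨i, hh i⟩ ⟨r, hh r⟩ Dir.out a, Sum.inl q')))}

open Classical in
/-- State type of the machine of participant `⟨i, p⟩` in the multicomposition:
the gateway state type if `p` is the interface of system `i`, the original
state type otherwise. -/
noncomputable def MCSt (S : ∀ i, CS (P i) A) (hh : ∀ i, P i) (x : (i : I) × P i) : Type :=
  if x.2 = hh x.1 then GWState S hh x.1 else (S x.1).St x.2

/-- The multicomposition `MC({S_i}, K)`: all machines of the single systems,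
with the machine of each interface `hh i` replaced by its gateway. -/
noncomputable def MC (S : ∀ i, CS (P i) A) (hh : ∀ i, P i)
    (Kd : ∀ i, Set ((S i).St (hh i) × Act I A × (S i).St (hh i))) :
    CS ((i : I) × P i) A where
  St := MCSt S hh
  init := fun x => by
    by_cases hp : x.2 = hh x.1
    · have h : MCSt S hh x = GWState S hh x.1 := by simp [MCSt, hp]
      rw [h]; exact Sum.inl ((S x.1).init (hh x.1))
    · have h : MCSt S hh x = (S x.1).St x.2 := by simp [MCSt, hp]
      rw [h]; exact (S x.1).init x.2
  delta := fun x => by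
    by_cases hp : x.2 = hh x.1
    · have h : MCSt S hh x = GWState S hh x.1 := by simp [MCSt, hp]
      rw [h]; exact GWdelta S hh Kd x.1
    · have h : MCSt S hh x = (S x.1).St x.2 := by simp [MCSt, hp]
      rw [h]
      exact {t | ∃ q l q', (q, l, q') ∈ (S x.1).delta x.2 ∧ t = (q, liftAct x.1 l, q')}

/-- The state of the gateway of interface `hh i` in a configuration of the
multicomposition, as an element of `GWState`. -/
noncomputable def toGW (S : ∀ i, CS (P i) A) (hh : ∀ i, P i) (i : I)
    (x : MCSt S hh ⟨i, hh i⟩) : GWState S hh i :=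
  cast (by simp [MCSt]) x

/-- The state of a non-interface participant in a configuration of the
multicomposition, as an element of its original state type. -/
noncomputable def toLoc (S : ∀ i, CS (P i) A) (hh : ∀ i, P i) {i : I} {p : P i}
    (hp : p ≠ hh i) (x : MCSt S hh ⟨i, p⟩) : (S i).St p :=
  cast (by simp [MCSt, hp]) x

/-- Projection of a configuration of the multicomposition to system `S i`,
assuming the gateway state of `hh i` is not a fresh intermediate state
(i.e. it is of the form `Sum.inl q`). -/
noncomputable def projSys (S : ∀ i, CS (P i) A) (hh : ∀ i, P i)
    (Kd : ∀ i, Set ((S i).St (hh i) × Act I A × (S i).St (hh i)))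
    (i : I) (s : Config (MC S hh Kd))
    (hq : ∃ q, toGW S hh i (s.st ⟨i, hh i⟩) = Sum.inl q) : Config (S i) where
  st := fun p => by
    by_cases hp : p = hh i
    · rw [hp]; exact hq.choose
    · exact toLoc S hh hp (s.st ⟨i, p⟩)
  ch := fun p q => s.ch ⟨i, p⟩ ⟨i, q⟩

/-- Projection of a configuration of the multicomposition to the connection
policy `K`, assuming no gateway is in a fresh intermediate state. -/
noncomputable def projPolicy (S : ∀ i, CS (P i) A) (hh : ∀ i, P i)
    (Kd : ∀ i, Set ((S i).St (hh i) × Act I A × (S i).St (hh i)))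
    (s : Config (MC S hh Kd))
    (hq : ∀ i, ∃ q, toGW S hh i (s.st ⟨i, hh i⟩) = Sum.inl q) :
    Config (policyCS S hh Kd) where
  st := fun i => (hq i).choose
  ch := fun i j => s.ch ⟨i, hh i⟩ ⟨j, hh j⟩

end Composition

end CFSM

section Auxx
open CFSM

@[reducible] def Sys : CS Bool Unit where
  St := fun _ => Fin 3
  init := fun _ => 0
  delta := fun p => match p with
    | true => {((0:Fin 3), Act.mk true false Dir.out (), (1:Fin 3)),
               ((0:Fin 3), Act.mk false true Dir.inp (), (2:Fin 3))}
    | false => {((0:Fin 3), Act.mk true false Dir.inp (), (1:Fin 3))}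

@[reducible] def mS : ∀ _ : Bool, CS Bool Unit := fun _ => Sys
@[reducible] def mh : ∀ _ : Bool, Bool := fun _ => true
@[reducible] def mK : ∀ b : Bool, Set ((mS b).St (mh b) × Act Bool Unit × (mS b).St (mh b)) := fun b =>
  {((0:Fin 3), Act.mk b (!b) Dir.out (), (2:Fin 3)),
   ((0:Fin 3), Act.mk (!b) b Dir.inp (), (1:Fin 3))}

-- cast helpers
lemma mem_mpr {α β L : Type} (eab : α = β) (e : Set (α × L × α) = Set (β × L × β))
    (s : Set (β × L × β)) (t : α × L × α) :
    t ∈ Eq.mpr e s ↔ (cast eab t.1, t.2.1, cast eab t.2.2) ∈ s := by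
  subst eab
  rfl

lemma cast_mpr {α β : Type} (e : α = β) (e' : α = β) (v : β) : cast e (Eq.mpr e' v) = v := by
  subst e; rfl

-- characterization of MC delta at interface
lemma mem_delta_int (b : Bool) (t : MCSt mS mh ⟨b, true⟩ × Act ((i : Bool) × Bool) Unit × MCSt mS mh ⟨b, true⟩) :
    t ∈ (MC mS mh mK).delta ⟨b, true⟩ ↔
      (toGW mS mh b t.1, t.2.1, toGW mS mh b t.2.2) ∈ GWdelta mS mh mK b := by
  simp only [MC]
  rw [dif_pos trivial]
  exact mem_mpr (by simp [MCSt, mh]) _ _ _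

-- characterization of MC delta at non-interface
lemma mem_delta_loc (b : Bool) (t : MCSt mS mh ⟨b, false⟩ × Act ((i : Bool) × Bool) Unit × MCSt mS mh ⟨b, false⟩) :
    t ∈ (MC mS mh mK).delta ⟨b, false⟩ ↔
      ∃ q l q', (q, l, q') ∈ (mS b).delta false ∧
        (toLoc mS mh (by simp [mh]) t.1, t.2.1, toLoc mS mh (by simp [mh]) t.2.2) = (q, liftAct b l, q') := by
  simp only [MC]
  rw [dif_neg (show ¬ false = mh b by simp [mh])]
  exact (mem_mpr (by simp [MCSt, mh]) _ _ _).trans Iff.rfl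

lemma init_int (b : Bool) :
    toGW mS mh b ((MC mS mh mK).initConfig.st ⟨b, true⟩) = Sum.inl ((0 : Fin 3)) := by
  show toGW mS mh b ((MC mS mh mK).init ⟨b, true⟩) = _
  simp only [MC]
  rw [dif_pos trivial]
  exact cast_mpr _ _ _

lemma init_loc (b : Bool) :
    toLoc mS mh (show false ≠ mh b by simp [mh]) ((MC mS mh mK).initConfig.st ⟨b, false⟩) = (0 : Fin 3) := by
  show toLoc mS mh _ ((MC mS mh mK).init ⟨b, false⟩) = _
  simp only [MC]
  rw [dif_neg (show ¬ false = mh b by simp [mh])]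
  exact cast_mpr _ _ _

end Auxx

open CFSM

-- ===== Sys basic facts =====
lemma Sys_wf : Sys.WellFormed := by
  intro p t ht
  cases p <;> simp only [Sys, Set.mem_insert_iff, Set.mem_singleton_iff] at ht
  · rw [ht]; exact ⟨rfl, by simp⟩
  · rcases ht with h | h <;> (rw [h]; exact ⟨rfl, by simp⟩)

lemma Sys_mixed : ∃ q, MixedSt (Sys.delta true) q :=
  ⟨0, ⟨Act.mk true false Dir.out (), 1, Or.inl rfl, rfl⟩,
      ⟨Act.mk false true Dir.inp (), 2, Or.inr rfl, rfl⟩⟩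

-- ===== Sys progress via invariant =====
def SInv (c : Config Sys) : Prop :=
  (c.st true = 0 ∧ c.st false = 0 ∧ ∀ p q, c.ch p q = []) ∨
  (c.st true = 1 ∧ c.st false = 0 ∧ c.ch true false = [()] ∧
      ∀ p q, ¬(p = true ∧ q = false) → c.ch p q = []) ∨
  (c.st true = 1 ∧ c.st false = 1 ∧ ∀ p q, c.ch p q = [])

lemma SInv_step {c c' : Config Sys} (h : SInv c) (hs : Step Sys c c') : SInv c' := by
  obtain ⟨⟨ls, lr, ld, ⟨⟩⟩, hst⟩ := hs
  cases ld
  case out =>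
    obtain ⟨hd, hstq, hch, hcho⟩ := hst
    cases ls <;>
      simp only [Sys, Set.mem_insert_iff, Set.mem_singleton_iff, Prod.mk.injEq,
        Act.mk.injEq] at hd
    · exact absurd hd (by simp)
    · rcases hd with ⟨hc0, ⟨_, hlr, _, _⟩, hc1⟩ | ⟨_, ⟨_, _, hdir, _⟩, _⟩
      · subst hlr
        rcases h with ⟨h1, h2, h3⟩ | ⟨h1, _, _, _⟩ | ⟨h1, _, _⟩
        · refine Or.inr (Or.inl ⟨hc1, ?_, ?_, ?_⟩)
          · rw [hstq false (by simp), h2]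
          · rw [hch, h3]; rfl
          · intro p q hpq
            have hne : (p, q) ≠ (true, false) := by
              intro hc; exact hpq ⟨congrArg Prod.fst hc, congrArg Prod.snd hc⟩
            rw [hcho p q hne]; exact h3 p q
        · rw [h1] at hc0; exact absurd hc0 (by decide)
        · rw [h1] at hc0; exact absurd hc0 (by decide)
      · exact absurd hdir (by simp)
  case inp =>
    obtain ⟨hd, hstq, hch, hcho⟩ := hst
    cases lr <;>
      simp only [Sys, Set.mem_insert_iff, Set.mem_singleton_iff, Prod.mk.injEq,
        Act.mk.injEq] at hd
    · -- receiver is p (false)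
      obtain ⟨hc0, ⟨hls, _, _, _⟩, hc1⟩ := hd
      subst hls
      rcases h with ⟨_, _, h3⟩ | ⟨h1, _, h3, h4⟩ | ⟨_, _, h3⟩
      · exfalso; rw [h3 true false] at hch; exact (List.cons_ne_nil _ _) hch.symm
      · refine Or.inr (Or.inr ⟨by rw [hstq true (by simp), h1], hc1, ?_⟩)
        intro p q
        by_cases hpq : (p, q) = (true, false)
        · obtain ⟨hp, hq⟩ : p = true ∧ q = false :=
            ⟨congrArg Prod.fst hpq, congrArg Prod.snd hpq⟩
          subst hp; subst hq
          rw [h3] at hch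
          exact ((List.cons.injEq _ _ _ _).mp hch).2.symm
        · rw [hcho p q hpq]
          exact h4 p q (fun ⟨hp, hq⟩ => hpq (by rw [hp, hq]))
      · exfalso; rw [h3 true false] at hch; exact (List.cons_ne_nil _ _) hch.symm
    · -- receiver is h (true)
      exfalso
      rcases hd with ⟨_, ⟨_, _, hdir, _⟩, _⟩ | ⟨hc0, ⟨hls, _, _, _⟩, _⟩
      · exact absurd hdir (by simp)
      · subst hls
        rcases h with ⟨_, _, h3⟩ | ⟨h1, _, _, h4⟩ | ⟨h1, _, h3⟩
        · rw [h3 false true] at hch; exact (List.cons_ne_nil _ _) hch.symm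
        · rw [h1] at hc0; exact absurd hc0 (by decide)
        · rw [h1] at hc0; exact absurd hc0 (by decide)

lemma SInv_reach {c : Config Sys} (h : c ∈ RC Sys) : SInv c := by
  induction h with
  | refl => exact Or.inl ⟨rfl, rfl, fun _ _ => rfl⟩
  | tail _ hbc ih => exact SInv_step ih hbc

lemma Sys_progress : ProgressProp Sys := by
  intro c hc
  rcases SInv_reach hc with ⟨h1, h2, h3⟩ | ⟨h1, h2, h3, h4⟩ | ⟨h1, h2, h3⟩
  · -- h can send
    left
    refine ⟨Config.mk (fun p => match p with | true => 1 | false => c.st false)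
            (fun p q => match p, q with
               | true, false => c.ch true false ++ [()]
               | true, true => c.ch true true
               | false, q => c.ch false q),
            Act.mk true false Dir.out (), ?_, ?_, ?_, ?_⟩
    · show ((c.st true, _, _) : Sys.St true × Act Bool Unit × Sys.St true) ∈ Sys.delta true
      rw [h1]; exact Or.inl rfl
    · intro p hp; cases p; rfl; exact absurd rfl hp
    · rfl
    · intro p q hpq
      cases p <;> cases q <;> first | rfl | exact absurd rfl hpq
  · -- p can receive
    left
    refine ⟨Config.mk (fun p => match p with | false => 1 | true => c.st true)
            (fun p q => match p, q with
               | true, false => []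
               | true, true => c.ch true true
               | false, q => c.ch false q),
            Act.mk true false Dir.inp (), ?_, ?_, ?_, ?_⟩
    · show ((c.st false, _, _) : Sys.St false × Act Bool Unit × Sys.St false) ∈ Sys.delta false
      rw [h2]; rfl
    · intro p hp; cases p; exact absurd rfl hp; rfl
    · show c.ch true false = () :: []
      rw [h3]
    · intro p q hpq
      cases p <;> cases q <;> first | rfl | exact absurd rfl hpq
  · -- all final
    right
    intro p l q' hm
    cases p <;> simp only [Sys, Set.mem_insert_iff, Set.mem_singleton_iff] at hm
    · have : c.st false = 0 := congrArg Prod.fst hm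
      rw [h2] at this; exact absurd this (by decide)
    · rcases hm with hm | hm <;>
        (have : c.st true = 0 := congrArg Prod.fst hm;
         rw [h1] at this; exact absurd this (by decide))

lemma bool_ne {i j : Bool} (h : j ≠ i) : j = !i := by
  cases i <;> cases j <;> simp_all

lemma mCM : IsConnModel mS mh (Set.univ : Set (Bool × Unit × Bool)) := by
  intro i a
  constructor
  · intro _
    exact ⟨!i, by cases i <;> simp, ⟨0, false, 1, Or.inl rfl⟩, trivial⟩
  · intro _
    exact ⟨!i, by cases i <;> simp, ⟨0, false, 2, Or.inr rfl⟩, trivial⟩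

lemma mPolicy : IsConnPolicy mS mh (Set.univ : Set (Bool × Unit × Bool)) mK := by
  intro i
  constructor
  · constructor
    · -- (*)
      intro q r a q' hmem
      simp only [mS, Sys, Set.mem_insert_iff, Set.mem_singleton_iff, Prod.mk.injEq,
        Act.mk.injEq] at hmem
      rcases hmem with ⟨_, ⟨_, _, hd, _⟩, _⟩ | ⟨hq, ⟨hr, _, _, _⟩, hq'⟩
      · exact absurd hd (by simp)
      · subst hq; subst hq'
        exact ⟨!i, by cases i <;> simp, trivial, Or.inl rfl⟩
    · -- (**)
      intro q r a q' hmem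
      simp only [mS, Sys, Set.mem_insert_iff, Set.mem_singleton_iff, Prod.mk.injEq,
        Act.mk.injEq] at hmem
      rcases hmem with ⟨hq, ⟨_, hr, _, _⟩, hq'⟩ | ⟨_, ⟨_, _, hd, _⟩, _⟩
      · subst hq; subst hq'
        exact ⟨!i, by cases i <;> simp, trivial, Or.inr rfl⟩
      · exact absurd hd (by simp)
  · -- minimality
    intro d' hsub hsat
    refine Set.Subset.antisymm hsub ?_
    intro x hx
    rcases hx with hx | hx
    · obtain ⟨j, hj, _, hd⟩ := hsat.1 0 false () 2 (Or.inr rfl)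
      rw [bool_ne hj] at hd
      rw [hx]; exact hd
    · obtain ⟨j, hj, _, hd⟩ := hsat.2 0 false () 1 (Or.inl rfl)
      rw [bool_ne hj] at hd
      rw [show x = ((0 : Fin 3), Act.mk (!i) i Dir.inp (), (1 : Fin 3)) from hx]; exact hd

instance (b : Bool) (n : Nat) : OfNat ((policyCS mS mh mK).St b) n :=
  inferInstanceAs (OfNat (Fin 3) n)

lemma mPolicy_progress : ProgressProp (policyCS mS mh mK) := by
  intro c _
  by_cases h1 : (c.st true : Fin 3) = 0
  · left
    refine ⟨Config.mk (fun p => match p with | true => 2 | false => c.st false)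
        (fun p q => match p, q with
          | true, false => c.ch true false ++ [()]
          | true, true => c.ch true true
          | false, q => c.ch false q),
        Act.mk true false Dir.out (), ?_, ?_, ?_, ?_⟩
    · show ((c.st true, _, _) : Fin 3 × Act Bool Unit × Fin 3) ∈ mK true
      rw [h1]; exact Or.inl rfl
    · intro p hp; cases p; rfl; exact absurd rfl hp
    · rfl
    · intro p q hpq
      cases p <;> cases q <;> first | rfl | exact absurd rfl hpq
  · by_cases h2 : (c.st false : Fin 3) = 0
    · left
      refine ⟨Config.mk (fun p => match p with | false => 2 | true => c.st true)
          (fun p q => match p, q with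
            | false, true => c.ch false true ++ [()]
            | false, false => c.ch false false
            | true, q => c.ch true q),
          Act.mk false true Dir.out (), ?_, ?_, ?_, ?_⟩
      · show ((c.st false, _, _) : Fin 3 × Act Bool Unit × Fin 3) ∈ mK false
        rw [h2]; exact Or.inl rfl
      · intro p hp; cases p; exact absurd rfl hp; rfl
      · rfl
      · intro p q hpq
        cases p <;> cases q <;> first | rfl | exact absurd rfl hpq
    · right
      intro p l q' hm
      rcases hm with hm | hm <;>
        (have h0 : (c.st p : Fin 3) = 0 := congrArg Prod.fst hm;
         cases p; exact h2 h0; exact h1 h0)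

lemma cast_cast_self {α β : Type} (e : β = α) (e2 : α = β) (v : β) :
    cast e2 (cast e v) = v := by subst e; rfl

lemma eSt : (Fin 3 : Type) = MCSt mS mh ⟨true, false⟩ := by
  simp [MCSt, mh]

lemma noMCprogress : ¬ ProgressProp (MC mS mh mK) := by
  intro hp
  rcases hp (CS.initConfig _) Relation.ReflTransGen.refl with ⟨c', l, hstep⟩ | hfin
  · obtain ⟨ls, lr, ld, ⟨⟩⟩ := l
    cases ld
    case inp =>
      obtain ⟨_, _, hch, _⟩ := hstep
      exact (List.cons_ne_nil _ _) hch.symm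
    case out =>
      obtain ⟨hd, _, _, _⟩ := hstep
      obtain ⟨b, pb⟩ := ls
      cases pb
      case false =>
        obtain ⟨q, l0, q', hl0, heq⟩ := (mem_delta_loc b _).mp hd
        have h2 := congrArg (fun t => t.2.1.dir) heq
        rw [show l0 = ((0 : Fin 3), Act.mk true false Dir.inp (), (1 : Fin 3)).2.1 from
          congrArg (fun t => t.2.1) hl0] at h2
        exact Dir.noConfusion h2
      case true =>
        have H := (mem_delta_int b _).mp hd
        rw [init_int b] at H
        simp only [GWdelta, Set.mem_setOf_eq] at H
        obtain ⟨q, a, q', H⟩ := H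
        rcases H with ⟨s, r, _, _, h | h⟩ | ⟨s, r, _, _, h | h⟩ <;>
          simp [Prod.ext_iff, Act.mk.injEq] at h
  · have hf := hfin ⟨true, false⟩
    refine hf (liftAct true (Act.mk true false Dir.inp ())) (cast eSt 1) ?_
    refine (mem_delta_loc true _).mpr ⟨0, Act.mk true false Dir.inp (), 1, rfl, ?_⟩
    refine Prod.ext ?_ (Prod.ext rfl ?_)
    · exact init_loc true
    · show toLoc mS mh (show (false:Bool) ≠ mh true by simp [mh]) (cast eSt 1) = (1 : Fin 3)
      simp only [toLoc]
      exact cast_cast_self _ _ _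

open CFSM in
/-- the no-mixed-state assumption cannot be dropped for
progress preservation. -/
theorem progress_not_preserved_with_mixed_states :
    ∃ (P : Bool → Type) (A : Type) (S : ∀ b, CS (P b) A) (hh : ∀ b, P b)
      (CM : Set (Bool × A × Bool))
      (Kd : ∀ b, Set ((S b).St (hh b) × Act Bool A × (S b).St (hh b))),
      (∀ b, Finite (P b)) ∧ Finite A ∧ (∀ b p, Finite ((S b).St p)) ∧
      (∀ b, (S b).WellFormed) ∧
      (∀ b, ∃ q, MixedSt ((S b).delta (hh b)) q) ∧
      IsConnModel S hh CM ∧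
      IsConnPolicy S hh CM Kd ∧
      (∀ b, ProgressProp (S b)) ∧
      ProgressProp (policyCS S hh Kd) ∧
      ¬ ProgressProp (MC S hh Kd) := by
  refine ⟨fun _ => Bool, Unit, mS, mh, Set.univ, mK, fun _ => inferInstance, inferInstance,
    fun _ _ => inferInstanceAs (Finite (Fin 3)), fun _ => Sys_wf, fun _ => Sys_mixed,
    mCM, mPolicy, fun _ => Sys_progress, mPolicy_progress, noMCprogress⟩
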